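/- Let K, P : ℕ → ℕ be sequences with K_n ≤ P_n and K_n²/P_n → 0, and suppose n³·(K_n³/P_n² + (K_n²/P_n)³) → ∞. Then for any constants a, b > 0 with a − 3b + 1 ≥ 0, (1/n²)·(1 − q(K_n,P_n))^a / β(K_n,P_n)^b → 0 as n → ∞. -/

import Mathlib

open Filter

/-- `q(K,P) = C(P-K,K)/C(P,K)` if `2K ≤ P`, else 0. -/
noncomputable def qKP (K P : ℕ) : ℝ :=
  if 2 * K ≤ P then ((P - K).choose K : ℝ) / (P.choose K) else 0

/-- `r(K,P) = C(P-2K,K)/C(P,K)` if `3K ≤ P`, else 0. -/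
noncomputable def rKP (K P : ℕ) : ℝ :=
  if 3 * K ≤ P then ((P - 2 * K).choose K : ℝ) / (P.choose K) else 0

/-- `β(K,P) = (1-q)³ + q³ - q r`. -/
noncomputable def betaKP (K P : ℕ) : ℝ :=
  (1 - qKP K P) ^ 3 + (qKP K P) ^ 3 - qKP K P * rKP K P

lemma q_nonneg (K P : ℕ) : 0 ≤ qKP K P := by
  rw [qKP]; split
  · positivity
  · exact le_refl 0

lemma r_nonneg (K P : ℕ) : 0 ≤ rKP K P := by
  rw [rKP]; split
  · positivity
  · exact le_refl 0

lemma q_lt_one (K P : ℕ) (hK : 0 < K) (hKP : K ≤ P) : qKP K P < 1 := by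
  rw [qKP]; split
  case isTrue h2 =>
    obtain ⟨k, rfl⟩ : ∃ k, K = k + 1 := ⟨K - 1, by omega⟩
    obtain ⟨p, rfl⟩ : ∃ p, P = p + 1 := ⟨P - 1, by omega⟩
    have hcp : 0 < (p+1).choose (k+1) := Nat.choose_pos hKP
    rw [div_lt_one (by exact_mod_cast hcp)]
    have hlt : (p + 1 - (k+1)).choose (k+1) < (p+1).choose (k+1) := by
      calc (p + 1 - (k+1)).choose (k+1) ≤ p.choose (k+1) :=
            Nat.choose_le_choose _ (by omega)
        _ < p.choose k + p.choose (k+1) := by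
            have : 0 < p.choose k := Nat.choose_pos (by omega)
            omega
        _ = (p+1).choose (k+1) := (Nat.choose_succ_succ p k).symm
    exact_mod_cast hlt
  case isFalse => norm_num

lemma q_le_pow (K P : ℕ) (hK : 0 < K) (h2 : 2 * K ≤ P) :
    qKP K P ≤ (1 - (K:ℝ)/P) ^ K := by
  have hP : 0 < P := by omega
  have hPR : (0:ℝ) < P := by exact_mod_cast hP
  rw [qKP, if_pos h2]
  have e1 : ((P-K).choose K : ℝ) / (P.choose K : ℝ)
      = ((P-K).descFactorial K : ℝ) / (P.descFactorial K : ℝ) := by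
    rw [Nat.descFactorial_eq_factorial_mul_choose, Nat.descFactorial_eq_factorial_mul_choose]
    push_cast
    rw [mul_div_mul_left]
    exact_mod_cast K.factorial_ne_zero
  rw [e1, Nat.descFactorial_eq_prod_range, Nat.descFactorial_eq_prod_range]
  push_cast
  rw [← Finset.prod_div_distrib]
  have hconst : (1 - (K:ℝ)/P) ^ K = ∏ _i ∈ Finset.range K, (1 - (K:ℝ)/P) := by
    rw [Finset.prod_const, Finset.card_range]
  rw [hconst]
  apply Finset.prod_le_prod
  · intro i _; positivity
  · intro i hi
    rw [Finset.mem_range] at hi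
    have hsub1 : ((P - K - i : ℕ) : ℝ) = (P:ℝ) - K - i := by
      rw [Nat.sub_sub, Nat.cast_sub (by omega : K + i ≤ P)]
      push_cast; ring
    have hsub2 : ((P - i : ℕ) : ℝ) = (P:ℝ) - i := by
      rw [Nat.cast_sub (by omega : i ≤ P)]
    rw [hsub1, hsub2]
    have hPi : (0:ℝ) < (P:ℝ) - i := by
      have : (i:ℝ) < (P:ℝ) := by exact_mod_cast (by omega : i < P)
      linarith
    have hrw : 1 - (K:ℝ)/P = ((P:ℝ) - K)/P := by field_simp
    rw [hrw, div_le_div_iff₀ hPi hPR]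
    have hiK : (0:ℝ) ≤ (i:ℝ) * (K:ℝ) := by positivity
    nlinarith

lemma r_le_q_sq (K P : ℕ) (hK : 0 < K) : rKP K P ≤ (qKP K P) ^ 2 := by
  rw [rKP]; split
  case isFalse => positivity
  case isTrue h3 =>
    have h2 : 2 * K ≤ P := by omega
    rw [qKP, if_pos h2]
    have hcp : 0 < P.choose K := Nat.choose_pos (by omega)
    have hcpR : (0:ℝ) < (P.choose K : ℝ) := by exact_mod_cast hcp
    -- key nat inequality on descFactorials
    have hdesc : (P - 2*K).descFactorial K * P.descFactorial K
        ≤ ((P - K).descFactorial K) ^ 2 := by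
      rw [Nat.descFactorial_eq_prod_range, Nat.descFactorial_eq_prod_range,
        Nat.descFactorial_eq_prod_range, ← Finset.prod_mul_distrib, ← Finset.prod_pow]
      apply Finset.prod_le_prod'
      intro i hi
      rw [Finset.mem_range] at hi
      have hc : K ≤ P - K - i := by omega
      have e1 : P - 2*K - i = (P - K - i) - K := by omega
      have e2 : P - i = (P - K - i) + K := by omega
      rw [e1, e2]
      obtain ⟨d, hd⟩ := Nat.exists_eq_add_of_le hc
      rw [hd, Nat.add_sub_cancel_left]
      nlinarith
    have hchoose : (P - 2*K).choose K * P.choose K ≤ ((P - K).choose K) ^ 2 := by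
      have h' := hdesc
      rw [Nat.descFactorial_eq_factorial_mul_choose, Nat.descFactorial_eq_factorial_mul_choose,
        Nat.descFactorial_eq_factorial_mul_choose] at h'
      have hf : 0 < K.factorial * K.factorial := Nat.mul_pos K.factorial_pos K.factorial_pos
      have h'' : K.factorial * K.factorial * ((P - 2*K).choose K * P.choose K)
          ≤ K.factorial * K.factorial * (((P - K).choose K) ^ 2) := by ring_nf at h' ⊢; linarith
      exact Nat.le_of_mul_le_mul_left h'' hf
    have hR : ((P - 2*K).choose K : ℝ) * (P.choose K : ℝ) ≤ (((P - K).choose K : ℝ)) ^ 2 := by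
      exact_mod_cast hchoose
    rw [div_pow, div_le_div_iff₀ hcpR (by positivity)]
    nlinarith

lemma beta_ge (K P : ℕ) (hK : 0 < K) : (1 - qKP K P) ^ 3 ≤ betaKP K P := by
  have h1 := r_le_q_sq K P hK
  have h2 := q_nonneg K P
  rw [betaKP]
  nlinarith

lemma tendsto_of_sq {y : ℕ → ℝ} (hy : ∀ n, 0 ≤ y n)
    (h : Tendsto (fun n => (y n) ^ 2) atTop atTop) : Tendsto y atTop atTop := by
  rw [tendsto_atTop] at h ⊢
  intro C
  filter_upwards [h ((max C 0) ^ 2)] with n hn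
  have h0 : 0 ≤ max C 0 := le_max_right _ _
  have : max C 0 ≤ y n := by nlinarith [hy n]
  exact le_trans (le_max_left _ _) this

set_option maxHeartbeats 1000000 in
theorem ratio_powers_to_zero (K P : ℕ → ℕ)
    (hK : ∀ n, 0 < K n) (hKP : ∀ n, K n ≤ P n)
    (hlim : Tendsto (fun n => ((K n : ℝ) ^ 2) / (P n : ℝ)) atTop (nhds 0))
    (hcond : Tendsto (fun n : ℕ =>
        (n : ℝ) ^ 3 * ((K n : ℝ) ^ 3 / (P n : ℝ) ^ 2 + ((K n : ℝ) ^ 2 / (P n : ℝ)) ^ 3))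
      atTop atTop)
    (a b : ℝ) (ha : 0 < a) (hb : 0 < b) (hab : 0 ≤ a - 3 * b + 1) :
    Tendsto (fun n : ℕ =>
        (1 / (n : ℝ) ^ 2) * ((1 - qKP (K n) (P n)) ^ a / (betaKP (K n) (P n)) ^ b))
      atTop (nhds 0) := by
  have hPpos : ∀ n, (0:ℝ) < (P n : ℝ) := fun n => by
    exact_mod_cast lt_of_lt_of_le (hK n) (hKP n)
  have hKpos : ∀ n, (0:ℝ) < (K n : ℝ) := fun n => by exact_mod_cast hK n
  have hxpos : ∀ n, 0 < (K n : ℝ) ^ 2 / (P n : ℝ) := fun n => by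
    have := hKpos n; have := hPpos n; positivity
  have hx1 : ∀ᶠ n in atTop, (K n : ℝ) ^ 2 / (P n : ℝ) ≤ 1 := by
    filter_upwards [hlim.eventually_lt_const one_pos] with n h using h.le
  -- n^2 * x n → ∞
  have hy : Tendsto (fun n : ℕ => (n:ℝ) ^ 2 * ((K n : ℝ) ^ 2 / (P n : ℝ))) atTop atTop := by
    apply tendsto_of_sq (fun n => by have := (hxpos n).le; positivity)
    apply tendsto_atTop_mono' atTop (f₁ := fun n : ℕ =>
      (n : ℝ) ^ 3 * ((K n : ℝ) ^ 3 / (P n : ℝ) ^ 2 + ((K n : ℝ) ^ 2 / (P n : ℝ)) ^ 3))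
    · filter_upwards [hx1, eventually_ge_atTop 2] with n h1 hn2
      have hn2' : (2:ℝ) ≤ (n:ℝ) := by exact_mod_cast hn2
      have hKn : (1:ℝ) ≤ (K n : ℝ) := by exact_mod_cast hK n
      have hxn := hxpos n
      have hPn := hPpos n
      have e1 : (K n : ℝ) ^ 3 / (P n : ℝ) ^ 2 ≤ ((K n : ℝ) ^ 2 / (P n : ℝ)) ^ 2 := by
        rw [div_pow, div_le_div_iff₀ (by positivity) (by positivity)]
        nlinarith [mul_nonneg (mul_nonneg (pow_nonneg (hKpos n).le 3) (sq_nonneg (P n : ℝ)))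
          (by linarith : (0:ℝ) ≤ (K n : ℝ) - 1)]
      have e2 : ((K n : ℝ) ^ 2 / (P n : ℝ)) ^ 3 ≤ ((K n : ℝ) ^ 2 / (P n : ℝ)) ^ 2 := by
        nlinarith [sq_nonneg ((K n : ℝ) ^ 2 / (P n : ℝ)), hxn, h1,
          mul_nonneg (sq_nonneg ((K n : ℝ) ^ 2 / (P n : ℝ)))
            (by linarith : (0:ℝ) ≤ 1 - (K n : ℝ) ^ 2 / (P n : ℝ))]
      have hn3 : (0:ℝ) ≤ (n:ℝ) ^ 3 := by positivity
      calc (n : ℝ) ^ 3 * ((K n : ℝ) ^ 3 / (P n : ℝ) ^ 2 + ((K n : ℝ) ^ 2 / (P n : ℝ)) ^ 3)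
          ≤ (n : ℝ) ^ 3 * (2 * ((K n : ℝ) ^ 2 / (P n : ℝ)) ^ 2) := by
            apply mul_le_mul_of_nonneg_left _ hn3
            linarith
        _ ≤ ((n:ℝ) ^ 2 * ((K n : ℝ) ^ 2 / (P n : ℝ))) ^ 2 := by
            nlinarith [mul_nonneg (mul_nonneg (pow_nonneg (by positivity : (0:ℝ) ≤ (n:ℝ)) 3)
              (sq_nonneg ((K n : ℝ) ^ 2 / (P n : ℝ)))) (by linarith : (0:ℝ) ≤ (n:ℝ) - 2)]
    · exact hcond
  -- the majorant tends to 0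
  have hg : Tendsto (fun n : ℕ => 1 / (n:ℝ) ^ 2 + 2 / ((n:ℝ) ^ 2 * ((K n : ℝ) ^ 2 / (P n : ℝ))))
      atTop (nhds 0) := by
    have h1 : Tendsto (fun n : ℕ => ((n:ℝ) ^ 2)) atTop atTop :=
      (tendsto_pow_atTop two_ne_zero).comp tendsto_natCast_atTop_atTop
    have h1' := h1.inv_tendsto_atTop
    have h2' := hy.inv_tendsto_atTop
    have hsum := h1'.add (h2'.const_mul 2)
    simp only [Pi.inv_apply, mul_zero, add_zero, zero_add] at hsum
    convert hsum using 2 with n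
    rw [one_div, div_eq_mul_inv]
  apply squeeze_zero'
  · filter_upwards with n
    have hq1 : qKP (K n) (P n) < 1 := q_lt_one _ _ (hK n) (hKP n)
    have hq0 : 0 ≤ qKP (K n) (P n) := q_nonneg _ _
    have hb0 : (0:ℝ) ≤ betaKP (K n) (P n) :=
      le_trans (pow_nonneg (by linarith) 3) (beta_ge _ _ (hK n))
    have h1 := Real.rpow_nonneg (by linarith : (0:ℝ) ≤ 1 - qKP (K n) (P n)) a
    have h2 := Real.rpow_nonneg hb0 b
    have h3 : (0:ℝ) ≤ 1 / (n:ℝ) ^ 2 := by positivity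
    exact mul_nonneg h3 (div_nonneg h1 h2)
  · filter_upwards [hx1, eventually_ge_atTop 1] with n hx1n hn1
    have hn1' : (1:ℝ) ≤ (n:ℝ) := by exact_mod_cast hn1
    have hq1 : qKP (K n) (P n) < 1 := q_lt_one _ _ (hK n) (hKP n)
    have hq0 : 0 ≤ qKP (K n) (P n) := q_nonneg _ _
    have h1q : 0 < 1 - qKP (K n) (P n) := by linarith
    have hxn := hxpos n
    have hn2pos : (0:ℝ) < (n:ℝ) ^ 2 := by positivity
    have hfrac : (0:ℝ) ≤ 1 / (n:ℝ) ^ 2 := by positivity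
    by_cases h2 : 2 * K n ≤ P n
    · -- main case
      have hqle : qKP (K n) (P n) ≤ (1 - (K n : ℝ)/(P n)) ^ (K n) := q_le_pow _ _ (hK n) h2
      have ht0 : 0 < (K n : ℝ) / (P n : ℝ) := div_pos (hKpos n) (hPpos n)
      have ht1 : (K n : ℝ) / (P n : ℝ) ≤ 1 := by
        rw [div_le_one (hPpos n)]; exact_mod_cast hKP n
      have hq_bound : qKP (K n) (P n) * (1 + (K n : ℝ) ^ 2 / (P n : ℝ)) ≤ 1 := by
        have e1 : (1 - (K n : ℝ)/(P n)) ^ (K n) * (1 + (K n : ℝ)/(P n)) ^ (K n) ≤ 1 := by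
          rw [← mul_pow]
          exact pow_le_one₀ (by nlinarith) (by nlinarith)
        have e2 : (1:ℝ) + (K n : ℝ) ^ 2 / (P n : ℝ) ≤ (1 + (K n : ℝ)/(P n)) ^ (K n) := by
          have h := one_add_mul_le_pow (by linarith : (-2:ℝ) ≤ (K n : ℝ)/(P n)) (K n)
          have exn : (K n : ℝ) ^ 2 / (P n : ℝ) = (K n : ℝ) * ((K n : ℝ)/(P n)) := by
            field_simp
          rw [exn]; exact h
        calc qKP (K n) (P n) * (1 + (K n : ℝ) ^ 2 / (P n : ℝ))
            ≤ (1 - (K n : ℝ)/(P n)) ^ (K n) * (1 + (K n : ℝ)/(P n)) ^ (K n) := by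
              apply mul_le_mul hqle e2 (by nlinarith) (pow_nonneg (by linarith) _)
          _ ≤ 1 := e1
      have hhalf : (K n : ℝ) ^ 2 / (P n : ℝ) / 2 ≤ 1 - qKP (K n) (P n) := by
        nlinarith [hxn, hx1n, hq_bound, hq0]
      have hβ : (1 - qKP (K n) (P n)) ^ 3 ≤ betaKP (K n) (P n) := beta_ge _ _ (hK n)
      have hβpos : (0:ℝ) < (1 - qKP (K n) (P n)) ^ 3 := by positivity
      have e3 : ((1 - qKP (K n) (P n)) ^ (3:ℕ) : ℝ) = (1 - qKP (K n) (P n)) ^ ((3:ℕ):ℝ) :=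
        (Real.rpow_natCast _ 3).symm
      have step1 : (1 - qKP (K n) (P n)) ^ a / (betaKP (K n) (P n)) ^ b
          ≤ (1 - qKP (K n) (P n)) ^ a / ((1 - qKP (K n) (P n)) ^ ((3:ℕ):ℝ)) ^ b := by
        apply div_le_div_of_nonneg_left (Real.rpow_nonneg h1q.le a)
        · exact Real.rpow_pos_of_pos (e3 ▸ hβpos) b
        · exact Real.rpow_le_rpow (e3 ▸ hβpos.le) (e3 ▸ hβ) hb.le
      have step2 : (1 - qKP (K n) (P n)) ^ a / ((1 - qKP (K n) (P n)) ^ ((3:ℕ):ℝ)) ^ b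
          = (1 - qKP (K n) (P n)) ^ (a - ((3:ℕ):ℝ)*b) := by
        rw [← Real.rpow_mul h1q.le, ← Real.rpow_sub h1q]
      have step3 : (1 - qKP (K n) (P n)) ^ (a - ((3:ℕ):ℝ)*b) ≤ (1 - qKP (K n) (P n)) ^ (-1:ℝ) := by
        apply Real.rpow_le_rpow_of_exponent_ge h1q (by linarith)
        push_cast; linarith
      have step4 : (1 - qKP (K n) (P n)) ^ (-1:ℝ) ≤ 2 / ((K n : ℝ) ^ 2 / (P n : ℝ)) := by
        rw [Real.rpow_neg_one]
        have h5 : ((K n : ℝ) ^ 2 / (P n : ℝ) / 2)⁻¹ = 2 / ((K n : ℝ) ^ 2 / (P n : ℝ)) := by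
          rw [inv_div]
        rw [← h5]
        exact inv_anti₀ (by linarith) hhalf
      have chain : (1 - qKP (K n) (P n)) ^ a / (betaKP (K n) (P n)) ^ b
          ≤ 2 / ((K n : ℝ) ^ 2 / (P n : ℝ)) :=
        le_trans step1 (by rw [step2]; exact le_trans step3 step4)
      calc (1 / (n:ℝ) ^ 2) * ((1 - qKP (K n) (P n)) ^ a / (betaKP (K n) (P n)) ^ b)
          ≤ (1 / (n:ℝ) ^ 2) * (2 / ((K n : ℝ) ^ 2 / (P n : ℝ))) :=
            mul_le_mul_of_nonneg_left chain hfrac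
        _ = 2 / ((n:ℝ) ^ 2 * ((K n : ℝ) ^ 2 / (P n : ℝ))) := by
            rw [div_mul_div_comm, one_mul]
        _ ≤ 1 / (n:ℝ) ^ 2 + 2 / ((n:ℝ) ^ 2 * ((K n : ℝ) ^ 2 / (P n : ℝ))) := by linarith
    · -- degenerate case: q = 0, β = 1
      have hq0' : qKP (K n) (P n) = 0 := by rw [qKP, if_neg h2]
      have hr0 : rKP (K n) (P n) = 0 := by
        rw [rKP, if_neg (by omega)]
      have hβ : betaKP (K n) (P n) = 1 := by
        rw [betaKP, hq0', hr0]; ring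
      rw [hq0', hβ]
      simp only [sub_zero, Real.one_rpow, div_one, mul_one]
      have h2x : (0:ℝ) ≤ 2 / ((n:ℝ) ^ 2 * ((K n : ℝ) ^ 2 / (P n : ℝ))) :=
        le_of_lt (div_pos two_pos (mul_pos hn2pos hxn))
      linarith
  · exact hg
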